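/- For every T > 0, the mixed partial derivative ∂_T ∂_S² ∂_U² F(S,T,U) evaluated at S = U = 0 equals 2·(log C)'''(T). (This is the coincidence-limit identity ∂_S ∂_U applied to the three-point density ∂_S∂_T∂_U F, evaluated at S = U = 0, equals the value of that density at (0,T,0) interpreted as 2·(log C)'''(T).) -/

import Mathlib

open Real MeasureTheory Filter
open Topology

/-- `Σ = √(3α²/2 − 1/8)`. -/
noncomputable def Sg (α : ℝ) : ℝ := Real.sqrt (3 * α ^ 2 / 2 - 1 / 8)

/-- `C(T) = Σ·cosh(ΣT) + α·sinh(ΣT)`. -/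
noncomputable def Cg (α : ℝ) (T : ℝ) : ℝ :=
  Sg α * Real.cosh (Sg α * T) + α * Real.sinh (Sg α * T)

/-- `Ĉ(T) = 2αΣ·cosh(ΣT) + (α²+Σ²)·sinh(ΣT)`. -/
noncomputable def Chat (α : ℝ) (T : ℝ) : ℝ :=
  2 * α * Sg α * Real.cosh (Sg α * T) + (α ^ 2 + Sg α ^ 2) * Real.sinh (Sg α * T)

/-- The even part of the three-point generating function. -/
noncomputable def Feven (α : ℝ) (S T U : ℝ) : ℝ :=
  (1 / Sg α ^ 2) * (Cg α S ^ 2 * Cg α T ^ 2 * Cg α U ^ 2 * Cg α (S + T + U) ^ 2)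
    / (Cg α (S + T) ^ 2 * Cg α (T + U) ^ 2 * Cg α (U + S) ^ 2)

/-- The odd part of the three-point generating function. -/
noncomputable def Fodd (α : ℝ) (S T U : ℝ) : ℝ :=
  ((α ^ 2 - Sg α ^ 2) ^ 2 / Sg α ^ 2) *
    (Real.sinh (Sg α * S) ^ 2 * Real.sinh (Sg α * T) ^ 2 * Real.sinh (Sg α * U) ^ 2
      * Chat α (S + T + U) ^ 2)
    / (Cg α (S + T) ^ 2 * Cg α (T + U) ^ 2 * Cg α (U + S) ^ 2)

/-- `F = F_even + F_odd`. -/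
noncomputable def Fg (α : ℝ) (S T U : ℝ) : ℝ := Feven α S T U + Fodd α S T U

/-- derivative of `Cg`. -/
noncomputable def Cd (α : ℝ) (x : ℝ) : ℝ :=
  α * Sg α * Real.cosh (Sg α * x) + Sg α ^ 2 * Real.sinh (Sg α * x)

/-- derivative of `Chat`. -/
noncomputable def Chd (α : ℝ) (x : ℝ) : ℝ :=
  2 * α * Sg α ^ 2 * Real.sinh (Sg α * x) + Sg α * (α ^ 2 + Sg α ^ 2) * Real.cosh (Sg α * x)

noncomputable def LL (α : ℝ) (x : ℝ) : ℝ := Cd α x / Cg α x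
noncomputable def MM (α : ℝ) (x : ℝ) : ℝ := Sg α ^ 2 - LL α x ^ 2
/-- derivative of `MM`. -/
noncomputable def DM (α : ℝ) (x : ℝ) : ℝ := -(2 * (LL α x * MM α x))

lemma hasDerivAt_smul_sinh (s x : ℝ) :
    HasDerivAt (fun y => Real.sinh (s * y)) (s * Real.cosh (s * x)) x := by
  have h := (Real.hasDerivAt_sinh (s * x)).comp x ((hasDerivAt_id x).const_mul s)
  simpa [mul_comm, Function.comp_def] using h

lemma hasDerivAt_smul_cosh (s x : ℝ) :
    HasDerivAt (fun y => Real.cosh (s * y)) (s * Real.sinh (s * x)) x := by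
  have h := (Real.hasDerivAt_cosh (s * x)).comp x ((hasDerivAt_id x).const_mul s)
  simpa [mul_comm, Function.comp_def] using h

lemma hasDerivAt_Cg (α x : ℝ) : HasDerivAt (Cg α) (Cd α x) x := by
  have h := ((hasDerivAt_smul_cosh (Sg α) x).const_mul (Sg α)).add
    ((hasDerivAt_smul_sinh (Sg α) x).const_mul α)
  have e : Sg α * (Sg α * Real.sinh (Sg α * x)) + α * (Sg α * Real.cosh (Sg α * x)) = Cd α x := by
    unfold Cd; ring
  rw [e] at h
  exact h

lemma hasDerivAt_Cd (α x : ℝ) : HasDerivAt (Cd α) (Sg α ^ 2 * Cg α x) x := by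
  have h := ((hasDerivAt_smul_cosh (Sg α) x).const_mul (α * Sg α)).add
    ((hasDerivAt_smul_sinh (Sg α) x).const_mul (Sg α ^ 2))
  have e : α * Sg α * (Sg α * Real.sinh (Sg α * x)) + Sg α ^ 2 * (Sg α * Real.cosh (Sg α * x))
      = Sg α ^ 2 * Cg α x := by unfold Cg; ring
  rw [e] at h
  exact h

lemma hasDerivAt_Chat (α x : ℝ) : HasDerivAt (Chat α) (Chd α x) x := by
  have h := ((hasDerivAt_smul_cosh (Sg α) x).const_mul (2 * α * Sg α)).add
    ((hasDerivAt_smul_sinh (Sg α) x).const_mul (α ^ 2 + Sg α ^ 2))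
  have e : 2 * α * Sg α * (Sg α * Real.sinh (Sg α * x))
      + (α ^ 2 + Sg α ^ 2) * (Sg α * Real.cosh (Sg α * x)) = Chd α x := by unfold Chd; ring
  rw [e] at h
  exact h

lemma hasDerivAt_Chd (α x : ℝ) : HasDerivAt (Chd α) (Sg α ^ 2 * Chat α x) x := by
  have h := ((hasDerivAt_smul_sinh (Sg α) x).const_mul (2 * α * Sg α ^ 2)).add
    ((hasDerivAt_smul_cosh (Sg α) x).const_mul (Sg α * (α ^ 2 + Sg α ^ 2)))
  have e : 2 * α * Sg α ^ 2 * (Sg α * Real.cosh (Sg α * x))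
      + Sg α * (α ^ 2 + Sg α ^ 2) * (Sg α * Real.sinh (Sg α * x)) = Sg α ^ 2 * Chat α x := by
    unfold Chat; ring
  rw [e] at h
  exact h

lemma hasDerivAt_LL (α x : ℝ) (h : Cg α x ≠ 0) : HasDerivAt (LL α) (MM α x) x := by
  have hd := (hasDerivAt_Cd α x).div (hasDerivAt_Cg α x) h
  have e : (Sg α ^ 2 * Cg α x * Cg α x - Cd α x * Cd α x) / Cg α x ^ 2 = MM α x := by
    unfold MM LL; field_simp
  rw [e] at hd
  exact hd

lemma hasDerivAt_MM (α x : ℝ) (h : Cg α x ≠ 0) : HasDerivAt (MM α) (DM α x) x := by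
  have hd := (((hasDerivAt_LL α x h).pow 2)).const_sub (Sg α ^ 2)
  have e : -(↑(2:ℕ) * LL α x ^ (2 - 1) * MM α x) = DM α x := by
    unfold DM; push_cast; ring
  rw [e] at hd
  exact hd

lemma Cg_zero (α : ℝ) : Cg α 0 = Sg α := by simp [Cg]
lemma Cd_zero (α : ℝ) : Cd α 0 = α * Sg α := by simp [Cd]
lemma Chat_zero (α : ℝ) : Chat α 0 = 2 * α * Sg α := by simp [Chat]
lemma LL_zero (α : ℝ) (hs : Sg α ≠ 0) : LL α 0 = α := by
  unfold LL; rw [Cg_zero, Cd_zero]; field_simp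
lemma MM_zero (α : ℝ) (hs : Sg α ≠ 0) : MM α 0 = Sg α ^ 2 - α ^ 2 := by
  unfold MM; rw [LL_zero α hs]

lemma keyI1 (α x : ℝ) :
    Sg α ^ 2 * Cg α x ^ 2 - Cd α x ^ 2 = Sg α ^ 4 - α ^ 2 * Sg α ^ 2 := by
  unfold Cg Cd
  linear_combination (Sg α ^ 4 - α ^ 2 * Sg α ^ 2) * Real.cosh_sq_sub_sinh_sq (Sg α * x)

lemma keyI2 (α x : ℝ) :
    Real.sinh (Sg α * x) * Chat α x = Cg α x ^ 2 - Sg α ^ 2 := by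
  unfold Cg Chat
  linear_combination (-(Sg α ^ 2)) * Real.cosh_sq_sub_sinh_sq (Sg α * x)

lemma continuous_Cg (α : ℝ) : Continuous (Cg α) := by
  unfold Cg; continuity

/-- closed form of `∂_U² F |_{U=0}`. -/
noncomputable def GG (α S T : ℝ) : ℝ :=
  2 * ((MM α 0 - MM α T) + (MM α (S + T) - MM α S))
  + 4 * ((LL α 0 - LL α T) + (LL α (S + T) - LL α S)) ^ 2
  + (2 * (α ^ 2 - Sg α ^ 2) ^ 2 * Real.sinh (Sg α * T) ^ 2) *
      ((Real.sinh (Sg α * S) ^ 2 * Chat α (S + T) ^ 2)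
        / (Cg α (S + T) ^ 2 * (Cg α T ^ 2 * Cg α S ^ 2)))

noncomputable def NA (α S T U : ℝ) : ℝ :=
  (1 / Sg α ^ 2 * (Cg α S ^ 2 * Cg α T ^ 2)) * (Cg α U ^ 2 * Cg α (S + T + U) ^ 2)
  + ((α ^ 2 - Sg α ^ 2) ^ 2 / Sg α ^ 2 * (Real.sinh (Sg α * S) ^ 2 * Real.sinh (Sg α * T) ^ 2)) *
      (Real.sinh (Sg α * U) ^ 2 * Chat α (S + T + U) ^ 2)

noncomputable def DA (α S T U : ℝ) : ℝ :=
  (Cg α (S + T) ^ 2 * Cg α (T + U) ^ 2) * Cg α (U + S) ^ 2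

noncomputable def N1A (α S T U : ℝ) : ℝ :=
  (1 / Sg α ^ 2 * (Cg α S ^ 2 * Cg α T ^ 2)) *
    ((2 * Cg α U * Cd α U) * Cg α (S + T + U) ^ 2
      + Cg α U ^ 2 * (2 * Cg α (S + T + U) * Cd α (S + T + U)))
  + ((α ^ 2 - Sg α ^ 2) ^ 2 / Sg α ^ 2 * (Real.sinh (Sg α * S) ^ 2 * Real.sinh (Sg α * T) ^ 2)) *
    ((2 * Real.sinh (Sg α * U) * (Sg α * Real.cosh (Sg α * U))) * Chat α (S + T + U) ^ 2
      + Real.sinh (Sg α * U) ^ 2 * (2 * Chat α (S + T + U) * Chd α (S + T + U)))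

noncomputable def D1A (α S T U : ℝ) : ℝ :=
  (Cg α (S + T) ^ 2 * (2 * Cg α (T + U) * Cd α (T + U))) * Cg α (U + S) ^ 2
  + (Cg α (S + T) ^ 2 * Cg α (T + U) ^ 2) * (2 * Cg α (U + S) * Cd α (U + S))

lemma hasDerivAt_shift_Cg (α a x : ℝ) :
    HasDerivAt (fun u => Cg α (a + u)) (Cd α (a + x)) x := by
  simpa [Function.comp_def] using (hasDerivAt_Cg α (a + x)).comp x ((hasDerivAt_id x).const_add a)

lemma hasDerivAt_shift_Cg' (α a x : ℝ) :
    HasDerivAt (fun u => Cg α (u + a)) (Cd α (x + a)) x := by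
  simpa [Function.comp_def] using (hasDerivAt_Cg α (x + a)).comp x ((hasDerivAt_id x).add_const a)

lemma hasDerivAt_shift_Cd (α a x : ℝ) :
    HasDerivAt (fun u => Cd α (a + u)) (Sg α ^ 2 * Cg α (a + x)) x := by
  simpa [Function.comp_def] using (hasDerivAt_Cd α (a + x)).comp x ((hasDerivAt_id x).const_add a)

lemma hasDerivAt_shift_Cd' (α a x : ℝ) :
    HasDerivAt (fun u => Cd α (u + a)) (Sg α ^ 2 * Cg α (x + a)) x := by
  simpa [Function.comp_def] using (hasDerivAt_Cd α (x + a)).comp x ((hasDerivAt_id x).add_const a)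

lemma hasDerivAt_shift_Chat (α a x : ℝ) :
    HasDerivAt (fun u => Chat α (a + u)) (Chd α (a + x)) x := by
  simpa [Function.comp_def] using (hasDerivAt_Chat α (a + x)).comp x ((hasDerivAt_id x).const_add a)

lemma hasDerivAt_shift_Chd (α a x : ℝ) :
    HasDerivAt (fun u => Chd α (a + u)) (Sg α ^ 2 * Chat α (a + x)) x := by
  simpa [Function.comp_def] using (hasDerivAt_Chd α (a + x)).comp x ((hasDerivAt_id x).const_add a)

lemma hasDerivAt_NA (α S T U : ℝ) :
    HasDerivAt (fun u => NA α S T u) (N1A α S T U) U := by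
  have hA := (hasDerivAt_Cg α U).pow 2
  have hB := (hasDerivAt_shift_Cg α (S + T) U).pow 2
  have hC := (hasDerivAt_smul_sinh (Sg α) U).pow 2
  have hD := (hasDerivAt_shift_Chat α (S + T) U).pow 2
  have h := ((hA.mul hB).const_mul (1 / Sg α ^ 2 * (Cg α S ^ 2 * Cg α T ^ 2))).add
    ((hC.mul hD).const_mul
      ((α ^ 2 - Sg α ^ 2) ^ 2 / Sg α ^ 2 * (Real.sinh (Sg α * S) ^ 2 * Real.sinh (Sg α * T) ^ 2)))
  refine HasDerivAt.congr_deriv (f := fun u => NA α S T u) h ?_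
  simp only [N1A, Pi.pow_apply]; push_cast; ring

lemma hasDerivAt_DA (α S T U : ℝ) :
    HasDerivAt (fun u => DA α S T u) (D1A α S T U) U := by
  have hE := (hasDerivAt_shift_Cg α T U).pow 2
  have hF := (hasDerivAt_shift_Cg' α S U).pow 2
  have h := ((hE.const_mul (Cg α (S + T) ^ 2)).mul hF)
  refine HasDerivAt.congr_deriv (f := fun u => DA α S T u) h ?_
  simp only [D1A, Pi.pow_apply]; push_cast; ring

lemma Fg_eq_NA_div_DA (α S T U : ℝ) : Fg α S T U = NA α S T U / DA α S T U := by
  simp only [Fg, Feven, Fodd, NA, DA]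
  rw [← add_div]
  rw [show (Cg α (S + T) ^ 2 * Cg α (T + U) ^ 2) * Cg α (U + S) ^ 2
    = Cg α (S + T) ^ 2 * Cg α (T + U) ^ 2 * Cg α (U + S) ^ 2 by ring]
  congr 1
  ring

lemma stageA (α S T : ℝ) (hs : Sg α ≠ 0) (hS : Cg α S ≠ 0) (hT : Cg α T ≠ 0)
    (hST : Cg α (S + T) ≠ 0) :
    iteratedDeriv 2 (fun U => Fg α S T U) 0 = GG α S T := by
  have h2 : iteratedDeriv 2 (fun U => Fg α S T U) 0
      = deriv (deriv (fun U => Fg α S T U)) 0 := by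
    simp [iteratedDeriv_succ, iteratedDeriv_zero]
  have hTU : ∀ᶠ u in 𝓝 (0:ℝ), Cg α (T + u) ≠ 0 := by
    have hc : ContinuousAt (fun u : ℝ => Cg α (T + u)) 0 :=
      ((continuous_Cg α).comp (continuous_const.add continuous_id)).continuousAt
    exact hc.eventually_ne (by simpa using hT)
  have hUS : ∀ᶠ u in 𝓝 (0:ℝ), Cg α (u + S) ≠ 0 := by
    have hc : ContinuousAt (fun u : ℝ => Cg α (u + S)) 0 :=
      ((continuous_Cg α).comp (continuous_id.add continuous_const)).continuousAt
    exact hc.eventually_ne (by simpa using hS)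
  have hDne : ∀ᶠ u in 𝓝 (0:ℝ), DA α S T u ≠ 0 := by
    filter_upwards [hTU, hUS] with u h1 h1'
    exact mul_ne_zero (mul_ne_zero (pow_ne_zero 2 hST) (pow_ne_zero 2 h1)) (pow_ne_zero 2 h1')
  have hfun : (fun U => Fg α S T U) = fun U => NA α S T U / DA α S T U :=
    funext fun U => Fg_eq_NA_div_DA α S T U
  have hderiv1 : deriv (fun U => Fg α S T U) =ᶠ[𝓝 (0:ℝ)] fun u =>
      (N1A α S T u * DA α S T u - NA α S T u * D1A α S T u) / DA α S T u ^ 2 := by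
    filter_upwards [hDne] with u hu
    rw [hfun]
    exact ((hasDerivAt_NA α S T u).div (hasDerivAt_DA α S T u) hu).deriv
  rw [h2, hderiv1.deriv_eq]
  have hden0 : DA α S T 0 ≠ 0 := by
    unfold DA
    simp only [add_zero, zero_add]
    exact mul_ne_zero (mul_ne_zero (pow_ne_zero 2 hST) (pow_ne_zero 2 hT)) (pow_ne_zero 2 hS)
  have c1 := hasDerivAt_Cg α (0:ℝ)
  have c2 := hasDerivAt_Cd α (0:ℝ)
  have c3 := hasDerivAt_shift_Cg α (S + T) (0:ℝ)
  have c4 := hasDerivAt_shift_Cd α (S + T) (0:ℝ)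
  have c5 := hasDerivAt_smul_sinh (Sg α) (0:ℝ)
  have c6 := hasDerivAt_smul_cosh (Sg α) (0:ℝ)
  have c7 := hasDerivAt_shift_Chat α (S + T) (0:ℝ)
  have c8 := hasDerivAt_shift_Chd α (S + T) (0:ℝ)
  have c9 := hasDerivAt_shift_Cg α T (0:ℝ)
  have c10 := hasDerivAt_shift_Cd α T (0:ℝ)
  have c11 := hasDerivAt_shift_Cg' α S (0:ℝ)
  have c12 := hasDerivAt_shift_Cd' α S (0:ℝ)
  have hN1' : HasDerivAt (fun u => N1A α S T u) _ 0 :=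
    (((((c1.const_mul 2).mul c2).mul (c3.pow 2)).add
        ((c1.pow 2).mul ((c3.const_mul 2).mul c4))).const_mul
      (1 / Sg α ^ 2 * (Cg α S ^ 2 * Cg α T ^ 2))).add
    (((((c5.const_mul 2).mul (c6.const_mul (Sg α))).mul (c7.pow 2)).add
        ((c5.pow 2).mul ((c7.const_mul 2).mul c8))).const_mul
      ((α ^ 2 - Sg α ^ 2) ^ 2 / Sg α ^ 2 *
        (Real.sinh (Sg α * S) ^ 2 * Real.sinh (Sg α * T) ^ 2)))
  have hD1' : HasDerivAt (fun u => D1A α S T u) _ 0 :=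
    ((((c9.const_mul 2).mul c10).const_mul (Cg α (S + T) ^ 2)).mul (c11.pow 2)).add
      (((c9.pow 2).const_mul (Cg α (S + T) ^ 2)).mul ((c11.const_mul 2).mul c12))
  have hNA0 := hasDerivAt_NA α S T 0
  have hDA0 := hasDerivAt_DA α S T 0
  have hg1 : HasDerivAt (fun u =>
      (N1A α S T u * DA α S T u - NA α S T u * D1A α S T u) / DA α S T u ^ 2) _ 0 :=
    ((hN1'.mul hDA0).sub (hNA0.mul hD1')).div (hDA0.pow 2) (pow_ne_zero 2 hden0)
  rw [hg1.deriv]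
  unfold NA DA N1A D1A GG
  rw [MM_zero α hs, LL_zero α hs]
  unfold MM LL
  simp only [add_zero, zero_add, mul_zero, Real.sinh_zero, Real.cosh_zero, Cg_zero, Cd_zero,
    Pi.pow_apply, Pi.mul_apply, Pi.add_apply, Pi.sub_apply, Pi.div_apply]
  push_cast
  field_simp
  ring

noncomputable def D2M (α : ℝ) (x : ℝ) : ℝ := -(2 * (MM α x * MM α x + LL α x * DM α x))

lemma hasDerivAt_DM (α x : ℝ) (h : Cg α x ≠ 0) : HasDerivAt (DM α) (D2M α x) x :=
  (((hasDerivAt_LL α x h).mul (hasDerivAt_MM α x h)).const_mul 2).neg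

lemma hasDerivAt_shift_Chat' (α a x : ℝ) :
    HasDerivAt (fun u => Chat α (u + a)) (Chd α (x + a)) x := by
  simpa [Function.comp_def] using (hasDerivAt_Chat α (x + a)).comp x ((hasDerivAt_id x).add_const a)

lemma hasDerivAt_shift_Chd' (α a x : ℝ) :
    HasDerivAt (fun u => Chd α (u + a)) (Sg α ^ 2 * Chat α (x + a)) x := by
  simpa [Function.comp_def] using (hasDerivAt_Chd α (x + a)).comp x ((hasDerivAt_id x).add_const a)

lemma hasDerivAt_shift_LL' (α a x : ℝ) (h : Cg α (x + a) ≠ 0) :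
    HasDerivAt (fun u => LL α (u + a)) (MM α (x + a)) x := by
  simpa [Function.comp_def] using (hasDerivAt_LL α (x + a) h).comp x ((hasDerivAt_id x).add_const a)

lemma hasDerivAt_shift_MM' (α a x : ℝ) (h : Cg α (x + a) ≠ 0) :
    HasDerivAt (fun u => MM α (u + a)) (DM α (x + a)) x := by
  simpa [Function.comp_def] using (hasDerivAt_MM α (x + a) h).comp x ((hasDerivAt_id x).add_const a)

lemma hasDerivAt_shift_DM' (α a x : ℝ) (h : Cg α (x + a) ≠ 0) :
    HasDerivAt (fun u => DM α (u + a)) (D2M α (x + a)) x := by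
  simpa [Function.comp_def] using (hasDerivAt_DM α (x + a) h).comp x ((hasDerivAt_id x).add_const a)

noncomputable def DEN (α T S : ℝ) : ℝ := Cg α (S + T) ^ 2 * (Cg α T ^ 2 * Cg α S ^ 2)

noncomputable def DEN1 (α T S : ℝ) : ℝ :=
  (2 * Cg α (S + T) * Cd α (S + T)) * (Cg α T ^ 2 * Cg α S ^ 2)
  + Cg α (S + T) ^ 2 * (Cg α T ^ 2 * (2 * Cg α S * Cd α S))

noncomputable def NB (α T S : ℝ) : ℝ :=
  (2 * Real.sinh (Sg α * S) * (Sg α * Real.cosh (Sg α * S))) * Chat α (S + T) ^ 2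
  + Real.sinh (Sg α * S) ^ 2 * (2 * Chat α (S + T) * Chd α (S + T))

noncomputable def G1 (α T S : ℝ) : ℝ :=
  2 * (DM α (S + T) - DM α S)
  + 4 * (2 * (((LL α 0 - LL α T) + (LL α (S + T) - LL α S)) * (MM α (S + T) - MM α S)))
  + (2 * (α ^ 2 - Sg α ^ 2) ^ 2 * Real.sinh (Sg α * T) ^ 2) *
      ((NB α T S * DEN α T S
        - (Real.sinh (Sg α * S) ^ 2 * Chat α (S + T) ^ 2) * DEN1 α T S) / DEN α T S ^ 2)

noncomputable def HH (α T : ℝ) : ℝ :=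
  2 * ((-2 * MM α T ^ 2 + 4 * LL α T ^ 2 * MM α T)
        - (-2 * (Sg α ^ 2 - α ^ 2) ^ 2 + 4 * α ^ 2 * (Sg α ^ 2 - α ^ 2)))
  + 8 * (MM α T - (Sg α ^ 2 - α ^ 2)) ^ 2
  + 4 * (α ^ 2 - Sg α ^ 2) ^ 2 * Real.sinh (Sg α * T) ^ 2 * Chat α T ^ 2 / Cg α T ^ 4

lemma hasDerivAt_GG (α T S : ℝ) (hS : Cg α S ≠ 0) (hT : Cg α T ≠ 0)
    (hST : Cg α (S + T) ≠ 0) :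
    HasDerivAt (fun S' => GG α S' T) (G1 α T S) S := by
  have hDENne : DEN α T S ≠ 0 :=
    mul_ne_zero (pow_ne_zero 2 hST) (mul_ne_zero (pow_ne_zero 2 hT) (pow_ne_zero 2 hS))
  have t1 := ((hasDerivAt_shift_MM' α T S hST).sub (hasDerivAt_MM α S hS)).const_add
      (MM α 0 - MM α T) |>.const_mul 2
  have t2 := ((((hasDerivAt_shift_LL' α T S hST).sub (hasDerivAt_LL α S hS)).const_add
      (LL α 0 - LL α T)).pow 2).const_mul 4
  have hden : HasDerivAt (fun S' => DEN α T S') _ S :=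
    ((hasDerivAt_shift_Cg' α T S).pow 2).mul
      (((hasDerivAt_Cg α S).pow 2).const_mul (Cg α T ^ 2))
  have hnum : HasDerivAt
      (fun S' => Real.sinh (Sg α * S') ^ 2 * Chat α (S' + T) ^ 2) _ S :=
    ((hasDerivAt_smul_sinh (Sg α) S).pow 2).mul ((hasDerivAt_shift_Chat' α T S).pow 2)
  have t3 := (hnum.div hden hDENne).const_mul
    (2 * (α ^ 2 - Sg α ^ 2) ^ 2 * Real.sinh (Sg α * T) ^ 2)
  have comb := (t1.add t2).add t3
  refine HasDerivAt.congr_deriv (f := fun S' => GG α S' T) comb ?_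
  unfold G1 NB DEN DEN1; simp only [Pi.pow_apply, Pi.sub_apply, Pi.add_apply, Pi.div_apply]; push_cast; ring

lemma stageB (α T : ℝ) (hs : Sg α ≠ 0) (hT : Cg α T ≠ 0) :
    iteratedDeriv 2 (fun S => GG α S T) 0 = HH α T := by
  have h2 : iteratedDeriv 2 (fun S => GG α S T) 0
      = deriv (deriv (fun S => GG α S T)) 0 := by
    simp [iteratedDeriv_succ, iteratedDeriv_zero]
  have hS0 : ∀ᶠ u in 𝓝 (0:ℝ), Cg α u ≠ 0 :=
    (continuous_Cg α).continuousAt.eventually_ne (by rw [Cg_zero]; exact hs)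
  have hST0 : ∀ᶠ u in 𝓝 (0:ℝ), Cg α (u + T) ≠ 0 := by
    have hc : ContinuousAt (fun u : ℝ => Cg α (u + T)) 0 :=
      ((continuous_Cg α).comp (continuous_id.add continuous_const)).continuousAt
    exact hc.eventually_ne (by simpa using hT)
  have hderiv1 : deriv (fun S => GG α S T) =ᶠ[𝓝 (0:ℝ)] fun S => G1 α T S := by
    filter_upwards [hS0, hST0] with u hu hu'
    exact (hasDerivAt_GG α T u hu hT hu').deriv
  rw [h2, hderiv1.deriv_eq]
  have h0T : Cg α (0 + T) ≠ 0 := by simpa using hT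
  have hS : Cg α (0:ℝ) ≠ 0 := by rw [Cg_zero]; exact hs
  have hDENne : DEN α T 0 ≠ 0 :=
    mul_ne_zero (pow_ne_zero 2 h0T) (mul_ne_zero (pow_ne_zero 2 hT) (pow_ne_zero 2 hS))
  -- second derivative at 0
  have t1 : HasDerivAt (fun S => 2 * (DM α (S + T) - DM α S)) _ 0 :=
    ((hasDerivAt_shift_DM' α T 0 h0T).sub (hasDerivAt_DM α 0 hS)).const_mul 2
  have t2 : HasDerivAt (fun S =>
      4 * (2 * (((LL α 0 - LL α T) + (LL α (S + T) - LL α S)) * (MM α (S + T) - MM α S)))) _ 0 :=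
    (((((((hasDerivAt_shift_LL' α T 0 h0T).sub (hasDerivAt_LL α 0 hS)).const_add
        (LL α 0 - LL α T))).mul
      ((hasDerivAt_shift_MM' α T 0 h0T).sub (hasDerivAt_MM α 0 hS))).const_mul 2).const_mul 4)
  have hNB : HasDerivAt (fun S => NB α T S) _ 0 :=
    ((((hasDerivAt_smul_sinh (Sg α) 0).const_mul 2).mul
        ((hasDerivAt_smul_cosh (Sg α) 0).const_mul (Sg α))).mul
      ((hasDerivAt_shift_Chat' α T 0).pow 2)).add
    (((hasDerivAt_smul_sinh (Sg α) 0).pow 2).mul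
      (((hasDerivAt_shift_Chat' α T 0).const_mul 2).mul (hasDerivAt_shift_Chd' α T 0)))
  have hDEN : HasDerivAt (fun S => DEN α T S) _ 0 :=
    ((hasDerivAt_shift_Cg' α T 0).pow 2).mul
      (((hasDerivAt_Cg α 0).pow 2).const_mul (Cg α T ^ 2))
  have hDEN1 : HasDerivAt (fun S => DEN1 α T S) _ 0 :=
    ((((hasDerivAt_shift_Cg' α T 0).const_mul 2).mul (hasDerivAt_shift_Cd' α T 0)).mul
      (((hasDerivAt_Cg α 0).pow 2).const_mul (Cg α T ^ 2))).add
    (((hasDerivAt_shift_Cg' α T 0).pow 2).mul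
      ((((hasDerivAt_Cg α 0).const_mul 2).mul (hasDerivAt_Cd α 0)).const_mul (Cg α T ^ 2)))
  have hnum2 : HasDerivAt (fun S => Real.sinh (Sg α * S) ^ 2 * Chat α (S + T) ^ 2) _ 0 :=
    ((hasDerivAt_smul_sinh (Sg α) 0).pow 2).mul ((hasDerivAt_shift_Chat' α T 0).pow 2)
  have t3 : HasDerivAt (fun S =>
      (2 * (α ^ 2 - Sg α ^ 2) ^ 2 * Real.sinh (Sg α * T) ^ 2) *
        ((NB α T S * DEN α T S
          - (Real.sinh (Sg α * S) ^ 2 * Chat α (S + T) ^ 2) * DEN1 α T S) / DEN α T S ^ 2)) _ 0 :=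
    ((((hNB.mul hDEN).sub (hnum2.mul hDEN1)).div (hDEN.pow 2)
        (pow_ne_zero 2 hDENne))).const_mul
      (2 * (α ^ 2 - Sg α ^ 2) ^ 2 * Real.sinh (Sg α * T) ^ 2)
  have hg : HasDerivAt (fun S => G1 α T S) _ 0 := (t1.add t2).add t3
  rw [hg.deriv]
  unfold NB DEN DEN1 HH D2M DM
  rw [MM_zero α hs, LL_zero α hs]
  unfold MM LL
  simp only [add_zero, zero_add, mul_zero, Real.sinh_zero, Real.cosh_zero, Cg_zero, Cd_zero,
    Pi.pow_apply, Pi.mul_apply, Pi.add_apply, Pi.sub_apply, Pi.div_apply]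
  push_cast
  field_simp
  ring

lemma MM_eq (α T : ℝ) (hT : Cg α T ≠ 0) :
    MM α T = (Sg α ^ 4 - α ^ 2 * Sg α ^ 2) / Cg α T ^ 2 := by
  unfold MM LL
  field_simp
  linear_combination keyI1 α T

lemma stageC (α T : ℝ) (hs2 : Sg α ^ 2 = 3 * α ^ 2 / 2 - 1 / 8) (hs : Sg α ≠ 0)
    (hT : Cg α T ≠ 0) :
    HH α T = 2 * (α ^ 2 - Sg α ^ 2) + 2 * Sg α ^ 2 * (Sg α ^ 2 - α ^ 2) / Cg α T ^ 2 := by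
  have hLT : LL α T ^ 2 = Sg α ^ 2 - (Sg α ^ 4 - α ^ 2 * Sg α ^ 2) / Cg α T ^ 2 := by
    unfold LL
    field_simp
    linear_combination -keyI1 α T
  have hsh : 4 * (α ^ 2 - Sg α ^ 2) ^ 2 * Real.sinh (Sg α * T) ^ 2 * Chat α T ^ 2
      = 4 * (α ^ 2 - Sg α ^ 2) ^ 2 * (Cg α T ^ 2 - Sg α ^ 2) ^ 2 := by
    linear_combination (4 * (α ^ 2 - Sg α ^ 2) ^ 2 *
      (Real.sinh (Sg α * T) * Chat α T + Cg α T ^ 2 - Sg α ^ 2)) * keyI2 α T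
  unfold HH
  rw [MM_eq α T hT, hLT, hsh]
  rw [show Sg α ^ 4 = (Sg α ^ 2) ^ 2 by ring]
  rw [hs2]
  field_simp
  ring

/-- For `T > 0`, `∂_T ∂_S² ∂_U² F(S,T,U)|_{S=U=0} = 2·(log C)'''(T)`. -/
theorem stmt10 (α : ℝ) (h1 : 1 / (2 * Real.sqrt 3) < α) (h2 : α < 1 / 2) :
    ∀ T : ℝ, 0 < T →
      deriv (fun T' =>
          iteratedDeriv 2 (fun S' => iteratedDeriv 2 (fun U' => Fg α S' T' U') 0) 0) T
        = 2 * iteratedDeriv 3 (fun x => Real.log (Cg α x)) T := by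
  intro T hT
  have h3 : (0:ℝ) < Real.sqrt 3 := Real.sqrt_pos.mpr (by norm_num)
  have hα : 0 < α := lt_trans (by positivity) h1
  have hsq3 : Real.sqrt 3 ^ 2 = 3 := Real.sq_sqrt (by norm_num)
  have h1' : 1 < α * (2 * Real.sqrt 3) := (div_lt_iff₀ (by positivity)).mp h1
  have hα2 : 1 / 12 < α ^ 2 := by nlinarith [sq_nonneg (α * (2 * Real.sqrt 3) - 1)]
  have hspos : (0:ℝ) < 3 * α ^ 2 / 2 - 1 / 8 := by linarith
  have hs2 : Sg α ^ 2 = 3 * α ^ 2 / 2 - 1 / 8 := Real.sq_sqrt hspos.le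
  have hsgpos : 0 < Sg α := Real.sqrt_pos.mpr hspos
  have hs : Sg α ≠ 0 := ne_of_gt hsgpos
  have hCgT : 0 < Cg α T := by
    have hsh : 0 < Real.sinh (Sg α * T) := Real.sinh_pos_iff.mpr (mul_pos hsgpos hT)
    exact add_pos (mul_pos hsgpos (Real.cosh_pos _)) (mul_pos hα hsh)
  have hVT : ∀ᶠ T' in 𝓝 T, Cg α T' ≠ 0 :=
    (continuous_Cg α).continuousAt.eventually_ne (ne_of_gt hCgT)
  have hEv : (fun T' => iteratedDeriv 2
        (fun S' => iteratedDeriv 2 (fun U' => Fg α S' T' U') 0) 0) =ᶠ[𝓝 T]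
      fun T' => 2 * (α ^ 2 - Sg α ^ 2) + 2 * Sg α ^ 2 * (Sg α ^ 2 - α ^ 2) / Cg α T' ^ 2 := by
    filter_upwards [hVT] with T' hT'
    have hS0 : ∀ᶠ S in 𝓝 (0:ℝ), Cg α S ≠ 0 :=
      (continuous_Cg α).continuousAt.eventually_ne (by rw [Cg_zero]; exact hs)
    have hST0 : ∀ᶠ S in 𝓝 (0:ℝ), Cg α (S + T') ≠ 0 := by
      have hc : ContinuousAt (fun u : ℝ => Cg α (u + T')) 0 :=
        ((continuous_Cg α).comp (continuous_id.add continuous_const)).continuousAt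
      exact hc.eventually_ne (by simpa using hT')
    have hinner : (fun S' => iteratedDeriv 2 (fun U' => Fg α S' T' U') 0) =ᶠ[𝓝 (0:ℝ)]
        fun S' => GG α S' T' := by
      filter_upwards [hS0, hST0] with S hSne hSTne
      exact stageA α S T' hs hSne hT' hSTne
    have hiter : iteratedDeriv 2 (fun S' => iteratedDeriv 2 (fun U' => Fg α S' T' U') 0) 0
        = iteratedDeriv 2 (fun S' => GG α S' T') 0 := by
      have hrw : (fun S' => iteratedDeriv 2 (fun U' => Fg α S' T' U') 0)
          = fun S' => deriv (deriv fun U' => Fg α S' T' U') 0 := by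
        funext S'; simp [iteratedDeriv_succ, iteratedDeriv_zero]
      simp only [iteratedDeriv_succ, iteratedDeriv_zero]
      exact ((hrw ▸ hinner).deriv).deriv_eq
    rw [hiter, stageB α T' hs hT', stageC α T' hs2 hs hT']
  rw [hEv.deriv_eq]
  have hphi : HasDerivAt (fun T' =>
      2 * (α ^ 2 - Sg α ^ 2) + 2 * Sg α ^ 2 * (Sg α ^ 2 - α ^ 2) / Cg α T' ^ 2) _ T :=
    (((hasDerivAt_const T (2 * Sg α ^ 2 * (Sg α ^ 2 - α ^ 2))).div
      ((hasDerivAt_Cg α T).pow 2) (pow_ne_zero 2 (ne_of_gt hCgT)))).const_add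
      (2 * (α ^ 2 - Sg α ^ 2))
  rw [hphi.deriv]
  have d1 : deriv (fun x => Real.log (Cg α x)) =ᶠ[𝓝 T] LL α := by
    filter_upwards [hVT] with x hx
    exact ((hasDerivAt_Cg α x).log hx).deriv
  have d2 : deriv (deriv (fun x => Real.log (Cg α x))) =ᶠ[𝓝 T] fun x => MM α x := by
    apply d1.deriv.trans
    filter_upwards [hVT] with x hx
    exact (hasDerivAt_LL α x hx).deriv
  have hRHS : iteratedDeriv 3 (fun x => Real.log (Cg α x)) T = DM α T := by
    have h3' : iteratedDeriv 3 (fun x => Real.log (Cg α x)) T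
        = deriv (deriv (deriv (fun x => Real.log (Cg α x)))) T := by
      simp [iteratedDeriv_succ, iteratedDeriv_zero]
    rw [h3', d2.deriv_eq]
    exact (hasDerivAt_MM α T (ne_of_gt hCgT)).deriv
  rw [hRHS]
  unfold DM
  rw [MM_eq α T (ne_of_gt hCgT)]
  unfold LL
  simp only [Pi.pow_apply]
  push_cast
  field_simp
  ring
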